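/- The chromatic polynomial evaluated at negative arguments alternates in sign: for a graph H on n vertices and any integer q ≥ 1, (−1)^n χ_H(−q) > 0. -/
import Mathlib


open SimpleGraph Polynomial Finset

/-- Number of proper colorings of `H` with `q` colors (the value of the chromatic
polynomial of `H` at `q`). -/
noncomputable def chromatic {V : Type*} [Fintype V] (H : SimpleGraph V) (q : ℕ) : ℕ :=
  Nat.card {f : V → Fin q // ∀ ⦃v w⦄, H.Adj v w → f v ≠ f w}

/-- Contraction of the edge `{a, b}` of `H`: the vertex `b` is identified with `a`
(loops and multiple edges arising from the identification are discarded). -/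
def SimpleGraph.contract {V : Type*} (H : SimpleGraph V) (a b : V) :
    SimpleGraph {v : V // v ≠ b} :=
  SimpleGraph.fromRel (fun x y =>
    H.Adj x.1 y.1 ∨ (x.1 = a ∧ H.Adj b y.1) ∨ (y.1 = a ∧ H.Adj x.1 b))

lemma chromatic_of_edgeSet_empty {V : Type*} [Fintype V] (H : SimpleGraph V)
    (h : H.edgeSet = ∅) (k : ℕ) : chromatic H k = k ^ Fintype.card V := by
  have hbot : H = ⊥ := SimpleGraph.edgeSet_eq_empty.mp h
  subst hbot
  unfold chromatic
  have E : {f : V → Fin k // ∀ ⦃v w⦄, (⊥ : SimpleGraph V).Adj v w → f v ≠ f w}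
      ≃ (V → Fin k) := Equiv.subtypeUnivEquiv (by intro f v w h; exact h.elim)
  rw [Nat.card_congr E, Nat.card_fun, Nat.card_eq_fintype_card, Nat.card_eq_fintype_card,
    Fintype.card_fin]

lemma delete_contract_count {V : Type*} [Fintype V] [DecidableEq V] (H : SimpleGraph V)
    {a b : V} (hab : H.Adj a b) (k : ℕ) :
    chromatic (H.deleteEdges {s(a,b)}) k
      = chromatic H k + chromatic (H.contract a b) k := by
  classical
  have hne : a ≠ b := hab.ne
  set G := H.deleteEdges {s(a,b)} with hGdef
  have hGadj : ∀ v w : V, G.Adj v w ↔ H.Adj v w ∧ s(v,w) ≠ s(a,b) := by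
    intro v w
    simp [hGdef, SimpleGraph.deleteEdges_adj]
  -- (1)
  have h1 : ∀ f : V → Fin k,
      ((∀ ⦃v w⦄, G.Adj v w → f v ≠ f w) ∧ f a ≠ f b) ↔
        (∀ ⦃v w⦄, H.Adj v w → f v ≠ f w) := by
    intro f
    constructor
    · rintro ⟨hf, hfab⟩ v w hvw
      by_cases hs : s(v,w) = s(a,b)
      · rcases Sym2.eq_iff.mp hs with ⟨rfl, rfl⟩ | ⟨rfl, rfl⟩
        · exact hfab
        · exact hfab.symm
      · exact hf ((hGadj v w).mpr ⟨hvw, hs⟩)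
    · intro hf
      exact ⟨fun v w hvw => hf ((hGadj v w).mp hvw).1, hf hab⟩
  -- (2)
  have h2 : ∀ f : V → Fin k, (∀ ⦃v w⦄, G.Adj v w → f v ≠ f w) → f a = f b →
      ∀ ⦃x y : {v : V // v ≠ b}⦄, (H.contract a b).Adj x y → f x.1 ≠ f y.1 := by
    intro f hf hfab x y hxy
    rw [SimpleGraph.contract, SimpleGraph.fromRel_adj] at hxy
    obtain ⟨hxyne, hr⟩ := hxy
    have hxyne' : x.1 ≠ y.1 := fun h => hxyne (Subtype.ext h)
    have aux : ∀ x y : {v : V // v ≠ b}, x.1 ≠ y.1 →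
        (H.Adj x.1 y.1 ∨ (x.1 = a ∧ H.Adj b y.1) ∨ (y.1 = a ∧ H.Adj x.1 b)) →
        f x.1 ≠ f y.1 := by
      rintro x y hxy (h | ⟨hxa, h⟩ | ⟨hya, h⟩)
      · refine hf ((hGadj _ _).mpr ⟨h, fun hs => ?_⟩)
        rcases Sym2.eq_iff.mp hs with ⟨_, h2⟩ | ⟨h1, _⟩
        · exact y.2 h2
        · exact x.2 h1
      · have hya : y.1 ≠ a := fun h' => hxy (hxa.trans h'.symm)
        have : f b ≠ f y.1 := by
          refine hf ((hGadj _ _).mpr ⟨h, fun hs => ?_⟩)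
          rcases Sym2.eq_iff.mp hs with ⟨h1, _⟩ | ⟨_, h2⟩
          · exact hne h1.symm
          · exact hya h2
        rw [hxa, hfab]; exact this
      · have hxa : x.1 ≠ a := fun h' => hxy (h'.trans hya.symm)
        have : f x.1 ≠ f b := by
          refine hf ((hGadj _ _).mpr ⟨h, fun hs => ?_⟩)
          rcases Sym2.eq_iff.mp hs with ⟨h1, _⟩ | ⟨_, h2⟩
          · exact hxa h1
          · exact hne h2.symm
        rw [hya, hfab]; exact this
    rcases hr with hr | hr
    · exact aux x y hxyne' hr
    · exact (aux y x hxyne'.symm hr).symm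
  -- (3)
  have h3 : ∀ g : {v : V // v ≠ b} → Fin k,
      (∀ ⦃x y : {v : V // v ≠ b}⦄, (H.contract a b).Adj x y → g x ≠ g y) →
      (∀ ⦃v w⦄, G.Adj v w →
        (fun v => if h : v = b then g ⟨a, hne⟩ else g ⟨v, h⟩) v
          ≠ (fun v => if h : v = b then g ⟨a, hne⟩ else g ⟨v, h⟩) w) := by
    intro g hg v w hvw
    obtain ⟨hH, hs⟩ := (hGadj v w).mp hvw
    by_cases hv : v = b <;> by_cases hw : w = b
    · exact absurd (hv ▸ hw ▸ hH) (H.irrefl)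
    · have hwa : w ≠ a := by
        intro h; apply hs; rw [hv, h]; exact Sym2.eq_swap
      have : (H.contract a b).Adj ⟨a, hne⟩ ⟨w, hw⟩ := by
        rw [SimpleGraph.contract, SimpleGraph.fromRel_adj]
        exact ⟨fun h => hwa (congrArg Subtype.val h).symm,
          Or.inl (Or.inr (Or.inl ⟨rfl, hv ▸ hH⟩))⟩
      simpa [hv, hw] using hg this
    · have hva : v ≠ a := by
        intro h; apply hs; rw [hw, h]
      have : (H.contract a b).Adj ⟨v, hv⟩ ⟨a, hne⟩ := by
        rw [SimpleGraph.contract, SimpleGraph.fromRel_adj]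
        exact ⟨fun h => hva (congrArg Subtype.val h),
          Or.inl (Or.inr (Or.inr ⟨rfl, hw ▸ hH⟩))⟩
      simpa [hv, hw] using hg this
    · have : (H.contract a b).Adj ⟨v, hv⟩ ⟨w, hw⟩ := by
        rw [SimpleGraph.contract, SimpleGraph.fromRel_adj]
        exact ⟨fun h => hH.ne (congrArg Subtype.val h), Or.inl (Or.inl hH)⟩
      simpa [hv, hw] using hg this
  -- the equivalence
  have E : {f : V → Fin k // ∀ ⦃v w⦄, G.Adj v w → f v ≠ f w}
      ≃ {f : V → Fin k // ∀ ⦃v w⦄, H.Adj v w → f v ≠ f w}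
        ⊕ {g : {v : V // v ≠ b} → Fin k //
            ∀ ⦃x y⦄, (H.contract a b).Adj x y → g x ≠ g y} := by
    refine
      { toFun := fun f => if h : f.1 a = f.1 b
          then Sum.inr ⟨fun x => f.1 x.1, h2 f.1 f.2 h⟩
          else Sum.inl ⟨f.1, (h1 f.1).mp ⟨f.2, h⟩⟩
        invFun := fun x => match x with
          | Sum.inl f => ⟨f.1, ((h1 f.1).mpr f.2).1⟩
          | Sum.inr g => ⟨fun v => if h : v = b then g.1 ⟨a, hne⟩ else g.1 ⟨v, h⟩,
              h3 g.1 g.2⟩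
        left_inv := ?_
        right_inv := ?_ }
    · rintro ⟨f, hf⟩
      by_cases h : f a = f b
      · simp only [h, dite_true]
        apply Subtype.ext
        funext v
        by_cases hv : v = b
        · simp [hv, h]
        · simp [hv]
      · simp only [h, dite_false]
    · rintro (⟨f, hf⟩ | ⟨g, hg⟩)
      · have : f a ≠ f b := hf hab
        simp only [this, dite_false]
      · have hcond : (fun v => if h : v = b then g ⟨a, hne⟩ else g ⟨v, h⟩) a
            = (fun v => if h : v = b then g ⟨a, hne⟩ else g ⟨v, h⟩) b := by
          simp [hne]
        simp only [hcond, dite_true]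
        congr 1
        apply Subtype.ext
        funext x
        simp [x.2]
  unfold chromatic
  rw [Nat.card_congr E, Nat.card_sum]

lemma key_empty {V : Type*} [Fintype V] (H : SimpleGraph V) (h : H.edgeSet = ∅) :
    ∃ P : Polynomial ℤ, (∀ k : ℕ, P.eval (k : ℤ) = chromatic H k) ∧
      ∀ q : ℤ, 1 ≤ q → 0 < (-1) ^ (Fintype.card V) * P.eval (-q) := by
  refine ⟨X ^ Fintype.card V, fun k => ?_, fun q hq => ?_⟩
  · rw [chromatic_of_edgeSet_empty H h]
    push_cast
    simp
  · rw [eval_pow, eval_X, ← mul_pow]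
    have : (-1 : ℤ) * (-q) = q := by ring
    rw [this]
    exact pow_pos (lt_of_lt_of_le zero_lt_one hq) _

lemma key_aux (n : ℕ) : ∀ (e : ℕ) (V : Type u) [Fintype V] (H : SimpleGraph V),
    Fintype.card V ≤ n → H.edgeSet.ncard ≤ e →
    ∃ P : Polynomial ℤ, (∀ k : ℕ, P.eval (k : ℤ) = chromatic H k) ∧
      ∀ q : ℤ, 1 ≤ q → 0 < (-1) ^ (Fintype.card V) * P.eval (-q) := by
  induction n with
  | zero =>
    intro e V _ H hV _
    have hemp : IsEmpty V := Fintype.card_eq_zero_iff.mp (Nat.le_zero.mp hV)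
    refine key_empty H ?_
    rw [Set.eq_empty_iff_forall_notMem]
    intro x
    induction x using Sym2.ind with
    | _ a b => exact fun _ => hemp.elim a
  | succ n ihn =>
    intro e
    induction e with
    | zero =>
      intro V _ H hV he
      have : H.edgeSet = ∅ := by
        have hfin : H.edgeSet.Finite := Set.toFinite _
        rw [← Set.ncard_eq_zero hfin] at *
        omega
      exact key_empty H this
    | succ e ihe =>
      intro V _ H hV he
      classical
      rcases H.edgeSet.eq_empty_or_nonempty with hemp | hne
      · exact key_empty H hemp
      · obtain ⟨a, b, hab⟩ := Sym2.exists.mp hne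
        rw [SimpleGraph.mem_edgeSet] at hab
        set G := H.deleteEdges {s(a,b)} with hGdef
        have hGcard : G.edgeSet.ncard ≤ e := by
          have hmem : s(a,b) ∈ H.edgeSet := hab
          have := Set.ncard_diff_singleton_add_one hmem (Set.toFinite _)
          rw [hGdef, SimpleGraph.edgeSet_deleteEdges]
          omega
        obtain ⟨P₁, hP₁v, hP₁s⟩ := ihe V G hV hGcard
        have hcsub : Fintype.card {v : V // v ≠ b} ≤ n := by
          have h1 : Fintype.card {v : V // v ≠ b}
              = Fintype.card V - Fintype.card {v : V // v = b} :=
            Fintype.card_subtype_compl _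
          rw [Fintype.card_subtype_eq] at h1
          omega
        obtain ⟨P₂, hP₂v, hP₂s⟩ :=
          ihn ((H.contract a b).edgeSet.ncard) {v : V // v ≠ b} (H.contract a b)
            hcsub le_rfl
        refine ⟨P₁ - P₂, fun k => ?_, fun q hq => ?_⟩
        · rw [eval_sub, hP₁v, hP₂v, delete_contract_count H hab k]
          push_cast
          ring
        · have hpos : 1 ≤ Fintype.card V := Fintype.card_pos_iff.mpr ⟨b⟩
          obtain ⟨m, hm⟩ : ∃ m, Fintype.card V = m + 1 :=
            ⟨Fintype.card V - 1, by omega⟩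
          have hm' : Fintype.card {v : V // v ≠ b} = m := by
            have h1 : Fintype.card {v : V // v ≠ b}
                = Fintype.card V - Fintype.card {v : V // v = b} :=
              Fintype.card_subtype_compl _
            rw [Fintype.card_subtype_eq] at h1
            omega
          have h2 := hP₂s q hq
          rw [hm'] at h2
          have h1 := hP₁s q hq
          rw [hm] at h1 ⊢
          have : (-1 : ℤ) ^ (m + 1) * (P₁ - P₂).eval (-q)
              = (-1) ^ (m + 1) * P₁.eval (-q) + (-1) ^ m * P₂.eval (-q) := by
            rw [eval_sub, pow_succ]
            ring
          rw [this]
          exact add_pos h1 h2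

lemma key {V : Type u} [Fintype V] (H : SimpleGraph V) :
    ∃ P : Polynomial ℤ, (∀ k : ℕ, P.eval (k : ℤ) = chromatic H k) ∧
      ∀ q : ℤ, 1 ≤ q → 0 < (-1) ^ (Fintype.card V) * P.eval (-q) :=
  key_aux (Fintype.card V) (H.edgeSet.ncard) V H le_rfl le_rfl

/-- The chromatic polynomial alternates in sign at negative arguments:
for a graph `H` on `n` vertices and any integer `q ≥ 1`, `(−1)^n χ_H(−q) > 0`. -/
theorem chromatic_alternates {V : Type*} [Fintype V] (H : SimpleGraph V)
    (P : Polynomial ℤ) (hP : ∀ k : ℕ, P.eval (k : ℤ) = chromatic H k)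
    (q : ℤ) (hq : 1 ≤ q) :
    0 < (-1) ^ (Fintype.card V) * P.eval (-q) := by
  obtain ⟨P₀, hv, hs⟩ := key H
  have hPP : P = P₀ := by
    apply Polynomial.eq_of_infinite_eval_eq
    apply Set.Infinite.mono (s := Set.range (Nat.cast : ℕ → ℤ))
    · rintro x ⟨k, rfl⟩
      simp only [Set.mem_setOf_eq]
      rw [hP, hv]
    · exact Set.infinite_range_of_injective Nat.cast_injective
  rw [hPP]
  exact hs q hq
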